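/- Let a ∈ ℝ, let g : (a,∞) → [0,∞) be a continuous log-convex function, and let ν be a Borel measure on [0,∞). Suppose h(x) := ∫_{[0,∞)} g(x+y) dν(y) is finite for every x > a. Then h is continuous and log-convex on (a,∞). -/

import Mathlib

open MeasureTheory Set

/-- On a short interval, a "log-convex" function is bounded by the max of the endpoints. -/
lemma max_bound_of_lc (a : ℝ) (g : ℝ → ℝ)
    (hg_cont : ContinuousOn g (Ioi a))
    (hg_nonneg : ∀ x, a < x → 0 ≤ g x)
    (hg_lc : ∀ x, a < x → ∀ y ∈ Ioo (0 : ℝ) 1,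
      (g (x + y)) ^ 2 ≤ g x * g (x + 2 * y)) :
    ∀ u v : ℝ, a < u → u < v → v - u < 2 → ∀ t ∈ Icc u v, g t ≤ max (g u) (g v) := by
  intro u v hau huv hlen t ht
  have hsub : Icc u v ⊆ Ioi a := fun s hs => lt_of_lt_of_le hau hs.1
  have hcK : ContinuousOn g (Icc u v) := hg_cont.mono hsub
  obtain ⟨t₀, ht₀K, ht₀max⟩ :=
    (isCompact_Icc : IsCompact (Icc u v)).exists_isMaxOn ⟨t, ht⟩ hcK
  have hMt : g t ≤ g t₀ := ht₀max ht
  have hMu : g u ≤ g t₀ := ht₀max (left_mem_Icc.2 huv.le)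
  have hMv : g v ≤ g t₀ := ht₀max (right_mem_Icc.2 huv.le)
  rcases le_or_gt (g t₀) 0 with hM0 | hM0
  · calc g t ≤ g t₀ := hMt
      _ ≤ 0 := hM0
      _ ≤ g u := hg_nonneg u hau
      _ ≤ max (g u) (g v) := le_max_left _ _
  -- M > 0 case
  have key : g t₀ ≤ max (g u) (g v) := by
    rcases eq_or_lt_of_le ht₀K.1 with h | h
    · exact h ▸ le_max_left _ _
    rcases eq_or_lt_of_le ht₀K.2 with h2 | h2
    · exact h2 ▸ le_max_right _ _
    rcases le_or_gt t₀ ((u + v) / 2) with hmid | hmid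
    · -- use base u, y = t₀ - u
      have hy : t₀ - u ∈ Ioo (0 : ℝ) 1 := ⟨by linarith, by linarith⟩
      have := hg_lc u hau (t₀ - u) hy
      have he1 : u + (t₀ - u) = t₀ := by ring
      have he2 : u + 2 * (t₀ - u) = 2 * t₀ - u := by ring
      rw [he1, he2] at this
      have hmem : (2 * t₀ - u) ∈ Icc u v := ⟨by linarith, by linarith⟩
      have hb : g (2 * t₀ - u) ≤ g t₀ := ht₀max hmem
      have hgu : 0 ≤ g u := hg_nonneg u hau
      have : g t₀ ^ 2 ≤ g u * g t₀ := le_trans this (by nlinarith)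
      have : g t₀ ≤ g u := by nlinarith
      exact this.trans (le_max_left _ _)
    · -- use base 2 t₀ - v, y = v - t₀
      have hbase : a < 2 * t₀ - v := by linarith
      have hy : v - t₀ ∈ Ioo (0 : ℝ) 1 := ⟨by linarith, by linarith⟩
      have := hg_lc (2 * t₀ - v) hbase (v - t₀) hy
      have he1 : 2 * t₀ - v + (v - t₀) = t₀ := by ring
      have he2 : 2 * t₀ - v + 2 * (v - t₀) = v := by ring
      rw [he1, he2] at this
      have hmem : (2 * t₀ - v) ∈ Icc u v := ⟨by linarith, by linarith⟩
      have hb : g (2 * t₀ - v) ≤ g t₀ := ht₀max hmem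
      have hgv : 0 ≤ g v := hg_nonneg v (lt_trans hau huv)
      have : g t₀ ^ 2 ≤ g t₀ * g v := le_trans this (by nlinarith)
      have : g t₀ ≤ g v := by nlinarith
      exact this.trans (le_max_right _ _)
  exact hMt.trans key

/-- Remark 2.2(ii), additive form: if `g` is continuous and log-convex on
`(a,∞)` and `ν` is a Borel measure on `[0,∞)`, then `h x := ∫_{[0,∞)} g (x + y) dν(y)`,
assumed finite (integrable) for every `x > a`, is continuous and log-convex on `(a,∞)`. -/
theorem integral_translate_logConvex (a : ℝ) (g : ℝ → ℝ) (ν : Measure ℝ)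
    (hg_cont : ContinuousOn g (Ioi a))
    (hg_nonneg : ∀ x, a < x → 0 ≤ g x)
    (hg_lc : ∀ x, a < x → ∀ y ∈ Ioo (0 : ℝ) 1,
      (g (x + y)) ^ 2 ≤ g x * g (x + 2 * y))
    (hint : ∀ x, a < x → IntegrableOn (fun y : ℝ => g (x + y)) (Ici 0) ν) :
    ContinuousOn (fun x : ℝ => ∫ y in Ici (0 : ℝ), g (x + y) ∂ν) (Ioi a) ∧
      ∀ x, a < x → ∀ y ∈ Ioo (0 : ℝ) 1,
        (∫ z in Ici (0 : ℝ), g (x + y + z) ∂ν) ^ 2 ≤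
          (∫ z in Ici (0 : ℝ), g (x + z) ∂ν) * ∫ z in Ici (0 : ℝ), g (x + 2 * y + z) ∂ν := by
  have hmax := max_bound_of_lc a g hg_cont hg_nonneg hg_lc
  constructor
  · -- continuity
    intro x₀ hx₀
    apply ContinuousAt.continuousWithinAt
    have hx₀' : a < x₀ := hx₀
    set δ : ℝ := min (1/2 : ℝ) ((x₀ - a)/2) with hδdef
    have hδpos : 0 < δ := lt_min (by norm_num) (by linarith)
    have hδle : δ ≤ 1/2 := min_le_left _ _
    have hδle2 : δ ≤ (x₀ - a)/2 := min_le_right _ _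
    have hau : a < x₀ - δ := by linarith
    have hav : a < x₀ + δ := by linarith
    apply continuousAt_of_dominated (bound := fun z => g (x₀ - δ + z) + g (x₀ + δ + z))
    · filter_upwards [Ioi_mem_nhds hx₀'] with x hx
      exact (hint x hx).aestronglyMeasurable
    · filter_upwards [Icc_mem_nhds (by linarith : x₀ - δ < x₀) (by linarith : x₀ < x₀ + δ)]
        with x hx
      rw [ae_restrict_iff' measurableSet_Ici]
      filter_upwards with z hz
      have hz0 : (0:ℝ) ≤ z := hz
      have hax : a < x + z := by have := hx.1; linarith
      rw [Real.norm_of_nonneg (hg_nonneg _ hax)]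
      have hb := hmax (x₀ - δ + z) (x₀ + δ + z) (by linarith) (by linarith)
        (by linarith)
        (x + z) ⟨by linarith [hx.1], by linarith [hx.2]⟩
      have h1 : 0 ≤ g (x₀ - δ + z) := hg_nonneg _ (by linarith)
      have h2 : 0 ≤ g (x₀ + δ + z) := hg_nonneg _ (by linarith)
      calc g (x + z) ≤ max (g (x₀ - δ + z)) (g (x₀ + δ + z)) := hb
        _ ≤ g (x₀ - δ + z) + g (x₀ + δ + z) := max_le (by linarith) (by linarith)
    · exact (hint (x₀ - δ) hau).add (hint (x₀ + δ) hav)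
    · rw [ae_restrict_iff' measurableSet_Ici]
      filter_upwards with z hz
      have hz0 : (0:ℝ) ≤ z := hz
      have hg' : ContinuousAt g (x₀ + z) :=
        hg_cont.continuousAt (Ioi_mem_nhds (by linarith))
      have hadd : ContinuousAt (fun x : ℝ => x + z) x₀ :=
        (continuous_id.add continuous_const).continuousAt
      have hcomp : ContinuousAt (g ∘ fun x : ℝ => x + z) x₀ :=
        ContinuousAt.comp (f := fun x : ℝ => x + z) (x := x₀) hg' hadd
      exact hcomp
  · -- log-convexity via Cauchy–Schwarz
    intro x hx y hy
    set μ := ν.restrict (Ici (0:ℝ)) with hμ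
    have hxy : a < x + y := by linarith [hy.1]
    have hx2y : a < x + 2 * y := by linarith [hy.1]
    have intA : Integrable (fun z => g (x + z)) μ := hint x hx
    have intB : Integrable (fun z => g (x + 2 * y + z)) μ := hint (x + 2*y) hx2y
    have intC : Integrable (fun z => g (x + y + z)) μ := hint (x + y) hxy
    have haeIci : ∀ᵐ z ∂μ, z ∈ Ici (0:ℝ) :=
      ae_restrict_mem measurableSet_Ici
    set F : ℝ → ℝ := fun z => Real.sqrt (g (x + z)) with hF
    set G : ℝ → ℝ := fun z => Real.sqrt (g (x + 2 * y + z)) with hG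
    have hFm : AEStronglyMeasurable F μ :=
      Real.continuous_sqrt.comp_aestronglyMeasurable intA.aestronglyMeasurable
    have hGm : AEStronglyMeasurable G μ :=
      Real.continuous_sqrt.comp_aestronglyMeasurable intB.aestronglyMeasurable
    have hF2 : MemLp F 2 μ := by
      rw [memLp_two_iff_integrable_sq hFm]
      apply intA.congr
      filter_upwards [haeIci] with z hz
      exact (Real.sq_sqrt (hg_nonneg _ (by linarith [mem_Ici.mp hz]))).symm
    have hG2 : MemLp G 2 μ := by
      rw [memLp_two_iff_integrable_sq hGm]
      apply intB.congr
      filter_upwards [haeIci] with z hz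
      exact (Real.sq_sqrt (hg_nonneg _ (by linarith [mem_Ici.mp hz]))).symm
    have hFGint : Integrable (fun z => F z * G z) μ := by
      have hs := hF2.smul hG2 (p := 2) (q := 2) (r := 1)
      rw [memLp_one_iff_integrable] at hs
      simpa [smul_eq_mul, mul_comm, Pi.mul_def] using hs
    have hFnn : 0 ≤ᵐ[μ] F := Filter.Eventually.of_forall fun z => Real.sqrt_nonneg _
    have hGnn : 0 ≤ᵐ[μ] G := Filter.Eventually.of_forall fun z => Real.sqrt_nonneg _
    -- pointwise bound
    have hpt : (fun z => g (x + y + z)) ≤ᵐ[μ] fun z => F z * G z := by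
      filter_upwards [haeIci] with z hz
      have hz0 : (0:ℝ) ≤ z := hz
      have h1 := hg_lc (x + z) (by linarith) y hy
      have he1 : x + z + y = x + y + z := by ring
      have he2 : x + z + 2 * y = x + 2 * y + z := by ring
      rw [he1, he2] at h1
      have hnn : 0 ≤ g (x + y + z) := hg_nonneg _ (by linarith)
      have : g (x + y + z) = Real.sqrt (g (x + y + z) ^ 2) := by
        rw [Real.sqrt_sq hnn]
      rw [this, hF, hG]
      calc Real.sqrt (g (x + y + z) ^ 2)
          ≤ Real.sqrt (g (x + z) * g (x + 2 * y + z)) := Real.sqrt_le_sqrt h1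
        _ = Real.sqrt (g (x + z)) * Real.sqrt (g (x + 2 * y + z)) := Real.sqrt_mul
            (hg_nonneg _ (by linarith)) _
    have hC : (∫ z, g (x + y + z) ∂μ) ≤ ∫ z, F z * G z ∂μ :=
      integral_mono_ae intC hFGint hpt
    have h2e : ENNReal.ofReal (2:ℝ) = 2 := by
      rw [ENNReal.ofReal_ofNat]
    have hCS := integral_mul_le_Lp_mul_Lq_of_nonneg (μ := μ)
      (Real.HolderConjugate.two_two)
      hFnn hGnn (h2e.symm ▸ hF2) (h2e.symm ▸ hG2)
    have hA : (∫ z, F z ^ (2:ℝ) ∂μ) = ∫ z, g (x + z) ∂μ := by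
      apply integral_congr_ae
      filter_upwards [haeIci] with z hz
      rw [hF, Real.rpow_two]
      exact Real.sq_sqrt (hg_nonneg _ (by linarith [mem_Ici.mp hz]))
    have hB : (∫ z, G z ^ (2:ℝ) ∂μ) = ∫ z, g (x + 2 * y + z) ∂μ := by
      apply integral_congr_ae
      filter_upwards [haeIci] with z hz
      rw [hG, Real.rpow_two]
      exact Real.sq_sqrt (hg_nonneg _ (by linarith [mem_Ici.mp hz]))
    rw [hA, hB] at hCS
    set A := ∫ z, g (x + z) ∂μ
    set B := ∫ z, g (x + 2 * y + z) ∂μ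
    set C := ∫ z, g (x + y + z) ∂μ
    have hCle : C ≤ A ^ (1/2 : ℝ) * B ^ (1/2 : ℝ) := hC.trans hCS
    have hCnn : 0 ≤ C := integral_nonneg_of_ae <| by
      filter_upwards [haeIci] with z hz
      exact hg_nonneg _ (by linarith [mem_Ici.mp hz])
    have hAnn : 0 ≤ A := integral_nonneg_of_ae <| by
      filter_upwards [haeIci] with z hz
      exact hg_nonneg _ (by linarith [mem_Ici.mp hz])
    have hBnn : 0 ≤ B := integral_nonneg_of_ae <| by
      filter_upwards [haeIci] with z hz
      exact hg_nonneg _ (by linarith [mem_Ici.mp hz])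
    rw [← Real.sqrt_eq_rpow, ← Real.sqrt_eq_rpow] at hCle
    nlinarith [Real.sq_sqrt hAnn, Real.sq_sqrt hBnn, Real.sqrt_nonneg A, Real.sqrt_nonneg B,
      Real.sqrt_nonneg A, mul_nonneg (Real.sqrt_nonneg A) (Real.sqrt_nonneg B)]
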